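/- Let C be a compact Riemann surface of genus g ≥ 2, x ∈ C, and let j_x : H⁰(C, K_C(2x)) → H¹(C, ℂ) be the injective map sending a meromorphic 1-form with at most a double pole at x (and zero residue) to its de Rham class on C ∖ {x}, extended by H¹(C∖{x}, ℂ) ≅ H¹(C, ℂ). Then the intersection j_x(H⁰(C, K_C(2x))) ∩ H^{0,1}(C) inside H¹(C, ℂ) is exactly one-dimensional. -/
import Mathlib


open Module

/-- For a compact Riemann surface of genus `g ≥ 2` and `x ∈ C`, with
`H1 = H¹(C, ℂ)` of dimension `2g`, Hodge decomposition `H1 = H10 ⊕ H01` with both pieces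
of dimension `g`, `V = H⁰(C, K_C(2x))` of dimension `g + 1`, and the injective de Rham
class map `j = j_x : V → H1` whose image contains `H10 = H^{1,0}(C)`, the intersection
`j_x(H⁰(C, K_C(2x))) ∩ H^{0,1}(C)` is exactly one-dimensional. -/
theorem stmt_6 (g : ℕ) (hg : 2 ≤ g)
    (H1 : Type) [AddCommGroup H1] [Module ℂ H1] [FiniteDimensional ℂ H1]
    (V : Type) [AddCommGroup V] [Module ℂ V] [FiniteDimensional ℂ V]
    (j : V →ₗ[ℂ] H1) (hj : Function.Injective j)
    (H10 H01 : Submodule ℂ H1)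
    (hcompl : IsCompl H10 H01)
    (hH1 : finrank ℂ H1 = 2 * g)
    (h10 : finrank ℂ H10 = g) (h01 : finrank ℂ H01 = g)
    (hV : finrank ℂ V = g + 1)
    (hsub : H10 ≤ LinearMap.range j) :
    finrank ℂ (LinearMap.range j ⊓ H01 : Submodule ℂ H1) = 1 := by
  set R := LinearMap.range j
  have hR : finrank ℂ R = g + 1 := by
    rw [LinearMap.finrank_range_of_inj hj, hV]
  have hsum := Submodule.finrank_sup_add_finrank_inf_eq R H01
  -- lower bound: dim(R ⊔ H01) ≤ 2g
  have hle : finrank ℂ ((R ⊔ H01 : Submodule ℂ H1)) ≤ 2 * g := by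
    rw [← hH1]; exact Submodule.finrank_le _
  have hlow : 1 ≤ finrank ℂ (R ⊓ H01 : Submodule ℂ H1) := by omega
  -- upper bound: H10 ⊔ (R ⊓ H01) ≤ R, and H10 ⊓ (R ⊓ H01) = ⊥
  have hdisj : H10 ⊓ (R ⊓ H01) = ⊥ := by
    rw [← inf_assoc, inf_comm H10 R, inf_assoc]
    rw [hcompl.inf_eq_bot, inf_bot_eq]
  have hsum2 := Submodule.finrank_sup_add_finrank_inf_eq H10 (R ⊓ H01)
  rw [hdisj] at hsum2
  simp only [finrank_bot, add_zero] at hsum2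
  have hle2 : finrank ℂ ((H10 ⊔ (R ⊓ H01) : Submodule ℂ H1)) ≤ finrank ℂ R := by
    apply Submodule.finrank_mono
    exact sup_le hsub inf_le_left
  omega
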